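/- Recurrence for degenerate Dowling polynomials (Theorem 2.8 with Y = 1): with D_{m,λ}(n,x) = Σ_{k=0}^{n} W_{m,λ}(n,k) x^k and W_{m,λ}(n,k) = (1/(m^k k!)) Σ_{j=0}^{k} C(k,j)(-1)^{k-j}(mj+1)_{n,λ}, for every n ≥ 0: D_{m,λ}(n+1,x) = Σ_{k=0}^{n} (-1)^{n-k} λ^{n-k} (n!/k!) D_{m,λ}(k,x) + (x/m) Σ_{k=0}^{n} C(n,k) D_{m,λ}(k,x) (m)_{n-k+1,λ}. -/

import Mathlib

/-- The degenerate falling factorial `(x)_{n,λ} = x(x-λ)⋯(x-(n-1)λ)`, with `(x)_{0,λ} = 1`. -/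
def degFall (x lam : ℝ) (n : ℕ) : ℝ :=
  ∏ i ∈ Finset.range n, (x - (i : ℝ) * lam)

/-- The degenerate Whitney numbers of the second kind. -/
noncomputable def degWhitney (m : ℕ) (lam : ℝ) (n k : ℕ) : ℝ :=
  (1 / ((m : ℝ) ^ k * (k.factorial : ℝ))) *
    ∑ j ∈ Finset.range (k + 1),
      (k.choose j : ℝ) * (-1 : ℝ) ^ (k - j) * degFall ((m : ℝ) * (j : ℝ) + 1) lam n

/-- The degenerate Dowling polynomials `D_{m,λ}(n,x) = Σ_{k=0}^n W_{m,λ}(n,k) xᵏ`. -/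
noncomputable def degDowling (m : ℕ) (lam : ℝ) (n : ℕ) (x : ℝ) : ℝ :=
  ∑ k ∈ Finset.range (n + 1), degWhitney m lam n k * x ^ k

lemma degFall_zero (x lam : ℝ) : degFall x lam 0 = 1 := by simp [degFall]

lemma degFall_succ (x lam : ℝ) (n : ℕ) :
    degFall x lam (n + 1) = degFall x lam n * (x - (n : ℝ) * lam) :=
  Finset.prod_range_succ _ _

/-- Degenerate Vandermonde identity. -/

lemma degFall_add (x y lam : ℝ) (n : ℕ) :
    degFall (x + y) lam n =
      ∑ l ∈ Finset.range (n + 1),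
        (n.choose l : ℝ) * degFall x lam l * degFall y lam (n - l) := by
  induction n with
  | zero => simp [degFall]
  | succ n ih =>
    rw [degFall_succ, ih, Finset.sum_range_succ' _ (n + 1)]
    have h1 : ∀ i ∈ Finset.range (n + 1),
        ((n + 1).choose (i + 1) : ℝ) * degFall x lam (i + 1) * degFall y lam (n + 1 - (i + 1))
          = (n.choose i : ℝ) * degFall x lam (i + 1) * degFall y lam (n - i)
            + (n.choose (i + 1) : ℝ) * degFall x lam (i + 1) * degFall y lam (n - i) := by
      intro i hi
      rw [Nat.choose_succ_succ]
      push_cast [Nat.succ_eq_add_one]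
      ring
    rw [Finset.sum_congr rfl h1, Finset.sum_add_distrib]
    have h2 : (∑ i ∈ Finset.range (n + 1),
        (n.choose (i + 1) : ℝ) * degFall x lam (i + 1) * degFall y lam (n - i))
          + ((n + 1).choose 0 : ℝ) * degFall x lam 0 * degFall y lam (n + 1 - 0)
        = ∑ l ∈ Finset.range (n + 1),
            (n.choose l : ℝ) * degFall x lam l * degFall y lam (n - l + 1) := by
      rw [Finset.sum_range_succ' (fun l => (n.choose l : ℝ) * degFall x lam l * degFall y lam (n - l + 1)) n,
        Finset.sum_range_succ]
      simp only [Nat.choose_succ_self, Nat.cast_zero, Nat.choose_zero_right, Nat.cast_one,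
        degFall_zero, zero_mul, mul_one, one_mul, add_zero]
      congr 1
      · apply Finset.sum_congr rfl
        intro i hi
        simp only [Finset.mem_range] at hi
        congr 2
        omega
    rw [add_assoc, h2, ← Finset.sum_add_distrib, Finset.sum_mul]
    apply Finset.sum_congr rfl
    intro i hi
    simp only [Finset.mem_range] at hi
    rw [degFall_succ x lam i, degFall_succ y lam (n - i)]
    have hc : ((n - i : ℕ) : ℝ) = (n : ℝ) - (i : ℝ) := by
      rw [Nat.cast_sub (by omega)]
    rw [hc]
    ring

noncomputable def degS (m : ℕ) (lam : ℝ) (n k : ℕ) : ℝ :=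
  ∑ j ∈ Finset.range (k + 1),
    (k.choose j : ℝ) * (-1 : ℝ) ^ (k - j) * degFall ((m : ℝ) * (j : ℝ) + 1) lam n

lemma degS_succ_succ (m : ℕ) (lam : ℝ) (n k : ℕ) :
    degS m lam (n + 1) (k + 1)
      = (1 - (n : ℝ) * lam) * degS m lam n (k + 1)
        + (m : ℝ) * ((k : ℝ) + 1) *
          ∑ l ∈ Finset.range (n + 1),
            (n.choose l : ℝ) * degFall (m : ℝ) lam (n - l) * degS m lam l k := by
  have split : degS m lam (n + 1) (k + 1)
      = (∑ j ∈ Finset.range (k + 2), ((k + 1).choose j : ℝ) * (-1 : ℝ) ^ (k + 1 - j)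
          * ((m : ℝ) * j * degFall ((m : ℝ) * j + 1) lam n))
        + (1 - (n : ℝ) * lam) * degS m lam n (k + 1) := by
    unfold degS
    rw [Finset.mul_sum, ← Finset.sum_add_distrib]
    apply Finset.sum_congr rfl
    intro j hj
    rw [degFall_succ]
    ring
  rw [split, add_comm]
  congr 1
  rw [Finset.sum_range_succ']
  simp only [Nat.cast_zero, mul_zero, zero_mul, add_zero]
  have step : ∀ i ∈ Finset.range (k + 1),
      ((k + 1).choose (i + 1) : ℝ) * (-1 : ℝ) ^ (k + 1 - (i + 1))
          * ((m : ℝ) * ((i : ℕ) + 1 : ℕ) * degFall ((m : ℝ) * ((i : ℕ) + 1 : ℕ) + 1) lam n)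
        = (m : ℝ) * ((k : ℝ) + 1) *
            ∑ l ∈ Finset.range (n + 1), (n.choose l : ℝ) * degFall (m : ℝ) lam (n - l) *
              ((k.choose i : ℝ) * (-1 : ℝ) ^ (k - i) * degFall ((m : ℝ) * i + 1) lam l) := by
    intro i hi
    have hch : ((k + 1).choose (i + 1) : ℝ) * ((i : ℝ) + 1) = ((k : ℝ) + 1) * (k.choose i : ℝ) := by
      have h := Nat.add_one_mul_choose_eq k i
      have h' : ((k + 1) * k.choose i : ℕ) = ((k + 1).choose (i + 1) * (i + 1) : ℕ) := by
        simpa [Nat.succ_eq_add_one] using h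
      have h'' := congrArg (Nat.cast : ℕ → ℝ) h'
      push_cast at h''
      linarith
    have hsub : k + 1 - (i + 1) = k - i := by omega
    have hF : degFall ((m : ℝ) * ((i : ℝ) + 1) + 1) lam n
        = ∑ l ∈ Finset.range (n + 1),
            (n.choose l : ℝ) * degFall ((m : ℝ) * i + 1) lam l * degFall (m : ℝ) lam (n - l) := by
      have h : (m : ℝ) * ((i : ℝ) + 1) + 1 = ((m : ℝ) * i + 1) + (m : ℝ) := by ring
      rw [h, degFall_add]
    push_cast
    rw [hF]
    simp only [Finset.mul_sum]
    apply Finset.sum_congr rfl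
    intro l hl
    have : ((k + 1).choose (i + 1) : ℝ) * (-1 : ℝ) ^ (k - i)
        * ((m : ℝ) * ((i : ℝ) + 1) * ((n.choose l : ℝ) * degFall ((m : ℝ) * i + 1) lam l * degFall (m : ℝ) lam (n - l)))
        = (((k + 1).choose (i + 1) : ℝ) * ((i : ℝ) + 1)) * ((-1 : ℝ) ^ (k - i)
          * ((m : ℝ) * ((n.choose l : ℝ) * degFall ((m : ℝ) * i + 1) lam l * degFall (m : ℝ) lam (n - l)))) := by ring
    rw [this, hch]
    ring
  rw [Finset.sum_congr rfl step, ← Finset.mul_sum]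
  congr 1
  rw [Finset.sum_comm]
  apply Finset.sum_congr rfl
  intro l hl
  unfold degS
  rw [Finset.mul_sum]

lemma alt_sum (k : ℕ) (hk : k ≠ 0) :
    ∑ j ∈ Finset.range (k + 1), (k.choose j : ℝ) * (-1 : ℝ) ^ (k - j) = 0 := by
  have h := Int.alternating_sum_range_choose (n := k)
  rw [if_neg hk] at h
  have h2 : ∑ j ∈ Finset.range (k + 1), ((-1 : ℝ)) ^ j * (k.choose j : ℝ) = 0 := by
    exact_mod_cast congrArg (Int.cast : ℤ → ℝ) h
  rw [← Finset.sum_range_reflect] at h2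
  rw [← h2]
  apply Finset.sum_congr rfl
  intro j hj
  simp only [Finset.mem_range] at hj
  have h3 : k + 1 - 1 - j = k - j := by omega
  rw [h3, Nat.choose_symm (by omega : j ≤ k)]
  ring

lemma degS_eq_zero (m : ℕ) (lam : ℝ) : ∀ n k : ℕ, n < k → degS m lam n k = 0 := by
  intro n
  induction n using Nat.strong_induction_on with
  | _ n ih =>
    intro k hk
    match n with
    | 0 =>
      unfold degS
      have : ∀ j ∈ Finset.range (k + 1),
          (k.choose j : ℝ) * (-1 : ℝ) ^ (k - j) * degFall ((m : ℝ) * j + 1) lam 0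
            = (k.choose j : ℝ) * (-1 : ℝ) ^ (k - j) := by
        intro j hj; rw [degFall_zero, mul_one]
      rw [Finset.sum_congr rfl this, alt_sum k (by omega)]
    | n + 1 =>
      obtain ⟨k', rfl⟩ : ∃ k', k = k' + 1 := ⟨k - 1, by omega⟩
      rw [degS_succ_succ, ih n (by omega) (k' + 1) (by omega)]
      have : ∀ l ∈ Finset.range (n + 1),
          (n.choose l : ℝ) * degFall (m : ℝ) lam (n - l) * degS m lam l k' = 0 := by
        intro l hl
        simp only [Finset.mem_range] at hl
        rw [ih l (by omega) k' (by omega), mul_zero]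
      rw [Finset.sum_congr rfl this]
      simp

lemma degWhitney_eq (m : ℕ) (lam : ℝ) (n k : ℕ) :
    degWhitney m lam n k = (1 / ((m : ℝ) ^ k * (k.factorial : ℝ))) * degS m lam n k := rfl

lemma degWhitney_eq_zero (m : ℕ) (lam : ℝ) {n k : ℕ} (h : n < k) :
    degWhitney m lam n k = 0 := by
  rw [degWhitney_eq, degS_eq_zero m lam n k h, mul_zero]

lemma degWhitney_zero_right (m : ℕ) (lam : ℝ) (n : ℕ) :
    degWhitney m lam n 0 = degFall 1 lam n := by
  simp [degWhitney_eq, degS]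

lemma degWhitney_succ_zero (m : ℕ) (lam : ℝ) (n : ℕ) :
    degWhitney m lam (n + 1) 0 = (1 - (n : ℝ) * lam) * degWhitney m lam n 0 := by
  rw [degWhitney_zero_right, degWhitney_zero_right, degFall_succ]
  ring

lemma degWhitney_succ_succ (m : ℕ) (hm : 0 < m) (lam : ℝ) (n k : ℕ) :
    degWhitney m lam (n + 1) (k + 1)
      = (1 - (n : ℝ) * lam) * degWhitney m lam n (k + 1)
        + ∑ l ∈ Finset.range (n + 1),
            (n.choose l : ℝ) * degFall (m : ℝ) lam (n - l) * degWhitney m lam l k := by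
  have hm' : (m : ℝ) ≠ 0 := Nat.cast_ne_zero.2 hm.ne'
  have hfac : (k.factorial : ℝ) ≠ 0 := Nat.cast_ne_zero.2 k.factorial_ne_zero
  simp only [degWhitney_eq]
  rw [degS_succ_succ]
  have hpull : ∑ l ∈ Finset.range (n + 1),
      (n.choose l : ℝ) * degFall (m : ℝ) lam (n - l)
        * ((1 / ((m : ℝ) ^ k * (k.factorial : ℝ))) * degS m lam l k)
      = (1 / ((m : ℝ) ^ k * (k.factorial : ℝ))) * ∑ l ∈ Finset.range (n + 1),
          (n.choose l : ℝ) * degFall (m : ℝ) lam (n - l) * degS m lam l k := by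
    rw [Finset.mul_sum]
    apply Finset.sum_congr rfl
    intro l hl
    ring
  rw [hpull]
  rw [Nat.factorial_succ]
  push_cast
  field_simp
  ring

lemma degDowling_trunc (m : ℕ) (lam : ℝ) (l N : ℕ) (hlN : l ≤ N) (x : ℝ) :
    degDowling m lam l x = ∑ i ∈ Finset.range (N + 1), degWhitney m lam l i * x ^ i := by
  unfold degDowling
  apply Finset.sum_subset
  · intro i hi
    simp only [Finset.mem_range] at *
    omega
  · intro i hi hni
    simp only [Finset.mem_range] at *
    rw [degWhitney_eq_zero m lam (by omega), zero_mul]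

lemma degDowling_rec1 (m : ℕ) (hm : 0 < m) (lam : ℝ) (n : ℕ) (x : ℝ) :
    degDowling m lam (n + 1) x
      = (1 - (n : ℝ) * lam) * degDowling m lam n x
        + x * ∑ l ∈ Finset.range (n + 1),
            (n.choose l : ℝ) * degFall (m : ℝ) lam (n - l) * degDowling m lam l x := by
  have expand : degDowling m lam (n + 1) x
      = (∑ i ∈ Finset.range (n + 1), degWhitney m lam (n + 1) (i + 1) * x ^ (i + 1))
        + degWhitney m lam (n + 1) 0 := by
    unfold degDowling
    rw [Finset.sum_range_succ' _ (n + 1)]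
    simp
  rw [expand, degWhitney_succ_zero]
  have step : ∀ i ∈ Finset.range (n + 1),
      degWhitney m lam (n + 1) (i + 1) * x ^ (i + 1)
        = (1 - (n : ℝ) * lam) * (degWhitney m lam n (i + 1) * x ^ (i + 1))
          + ∑ l ∈ Finset.range (n + 1),
              (n.choose l : ℝ) * degFall (m : ℝ) lam (n - l) * (degWhitney m lam l i * x ^ i) * x := by
    intro i hi
    rw [degWhitney_succ_succ m hm, add_mul, Finset.sum_mul]
    congr 1
    · ring
    · apply Finset.sum_congr rfl
      intro l hl
      ring
  rw [Finset.sum_congr rfl step, Finset.sum_add_distrib]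
  have part1 : (∑ i ∈ Finset.range (n + 1),
        (1 - (n : ℝ) * lam) * (degWhitney m lam n (i + 1) * x ^ (i + 1)))
        + (1 - (n : ℝ) * lam) * degWhitney m lam n 0
      = (1 - (n : ℝ) * lam) * degDowling m lam n x := by
    rw [← Finset.mul_sum, ← mul_add]
    congr 1
    have : degDowling m lam n x
        = ∑ k ∈ Finset.range (n + 1 + 1), degWhitney m lam n k * x ^ k :=
      degDowling_trunc m lam n (n + 1) (by omega) x
    rw [this, Finset.sum_range_succ' _ (n + 1)]
    simp
  have part2 : ∑ i ∈ Finset.range (n + 1),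
      ∑ l ∈ Finset.range (n + 1),
        (n.choose l : ℝ) * degFall (m : ℝ) lam (n - l) * (degWhitney m lam l i * x ^ i) * x
      = x * ∑ l ∈ Finset.range (n + 1),
          (n.choose l : ℝ) * degFall (m : ℝ) lam (n - l) * degDowling m lam l x := by
    rw [Finset.sum_comm, Finset.mul_sum]
    apply Finset.sum_congr rfl
    intro l hl
    simp only [Finset.mem_range] at hl
    rw [degDowling_trunc m lam l n (by omega) x, Finset.mul_sum, Finset.mul_sum]
    apply Finset.sum_congr rfl
    intro i hi
    ring
  rw [add_assoc, add_comm (∑ i ∈ Finset.range (n + 1), ∑ l ∈ Finset.range (n + 1), _),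
    ← add_assoc, part1, part2]

lemma T_rec (m : ℕ) (lam x : ℝ) (n : ℕ) :
    ∑ k ∈ Finset.range (n + 2),
        ((n + 1).choose k : ℝ) * degDowling m lam k x * degFall (m : ℝ) lam (n + 1 - k + 1)
      = (m : ℝ) * (∑ l ∈ Finset.range (n + 2),
            ((n + 1).choose l : ℝ) * degFall (m : ℝ) lam (n + 1 - l) * degDowling m lam l x)
        - ((n : ℝ) + 1) * lam * ∑ k ∈ Finset.range (n + 1),
            (n.choose k : ℝ) * degDowling m lam k x * degFall (m : ℝ) lam (n - k + 1) := by
  have e1 : ∀ k ∈ Finset.range (n + 2),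
      ((n + 1).choose k : ℝ) * degDowling m lam k x * degFall (m : ℝ) lam (n + 1 - k + 1)
        = (m : ℝ) * (((n + 1).choose k : ℝ) * degFall (m : ℝ) lam (n + 1 - k) * degDowling m lam k x)
          - lam * (((n + 1 - k) * ((n + 1).choose k) : ℕ) : ℝ) * degDowling m lam k x
              * degFall (m : ℝ) lam (n + 1 - k) := by
    intro k hk
    rw [degFall_succ]
    push_cast
    ring
  rw [Finset.sum_congr rfl e1, Finset.sum_sub_distrib, ← Finset.mul_sum]
  congr 1
  have e2 : ∀ k ∈ Finset.range (n + 2),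
      lam * (((n + 1 - k) * ((n + 1).choose k) : ℕ) : ℝ) * degDowling m lam k x
          * degFall (m : ℝ) lam (n + 1 - k)
        = ((n : ℝ) + 1) * lam *
            ((n.choose k : ℝ) * degDowling m lam k x * degFall (m : ℝ) lam (n + 1 - k)) := by
    intro k hk
    have h' := congrArg (Nat.cast : ℕ → ℝ) (Nat.choose_mul_succ_eq n k)
    push_cast at h' ⊢
    linear_combination (- lam * degDowling m lam k x * degFall (m : ℝ) lam (n + 1 - k)) * h'
  rw [Finset.sum_congr rfl e2, ← Finset.mul_sum, Finset.sum_range_succ]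
  simp only [Nat.choose_succ_self, Nat.cast_zero, zero_mul, add_zero]
  congr 1
  apply Finset.sum_congr rfl
  intro k hk
  simp only [Finset.mem_range] at hk
  congr 2
  omega

/-- Recurrence:
`D_{m,λ}(n+1,x) = Σ_{k=0}^n (-1)^{n-k} λ^{n-k} (n!/k!) D_{m,λ}(k,x)
  + (x/m) Σ_{k=0}^n C(n,k) D_{m,λ}(k,x) (m)_{n-k+1,λ}`. -/
theorem degDowling_recurrence (m : ℕ) (hm : 0 < m) (lam : ℝ) (n : ℕ) (x : ℝ) :
    degDowling m lam (n + 1) x =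
      (∑ k ∈ Finset.range (n + 1),
          (-1 : ℝ) ^ (n - k) * lam ^ (n - k) * ((n.factorial : ℝ) / (k.factorial : ℝ)) *
            degDowling m lam k x) +
      (x / (m : ℝ)) *
        ∑ k ∈ Finset.range (n + 1),
          (n.choose k : ℝ) * degDowling m lam k x * degFall (m : ℝ) lam (n - k + 1) := by
  have hm' : (m : ℝ) ≠ 0 := Nat.cast_ne_zero.2 hm.ne'
  induction n with
  | zero =>
    rw [degDowling_rec1 m hm lam 0 x]
    simp [degFall]
    field_simp
  | succ n ih =>
    rw [degDowling_rec1 m hm lam (n + 1) x]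
    have hS : ∑ k ∈ Finset.range (n + 2),
        (-1 : ℝ) ^ (n + 1 - k) * lam ^ (n + 1 - k) * (((n + 1).factorial : ℝ) / (k.factorial : ℝ))
          * degDowling m lam k x
        = degDowling m lam (n + 1) x
          - ((n : ℝ) + 1) * lam * ∑ k ∈ Finset.range (n + 1),
              (-1 : ℝ) ^ (n - k) * lam ^ (n - k) * ((n.factorial : ℝ) / (k.factorial : ℝ))
                * degDowling m lam k x := by
      rw [Finset.sum_range_succ]
      have h1 : (-1 : ℝ) ^ (n + 1 - (n + 1)) * lam ^ (n + 1 - (n + 1))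
          * (((n + 1).factorial : ℝ) / ((n + 1).factorial : ℝ)) * degDowling m lam (n + 1) x
          = degDowling m lam (n + 1) x := by
        have : ((n + 1).factorial : ℝ) ≠ 0 := Nat.cast_ne_zero.2 (n + 1).factorial_ne_zero
        rw [Nat.sub_self]
        field_simp
      have h2 : ∀ k ∈ Finset.range (n + 1),
          (-1 : ℝ) ^ (n + 1 - k) * lam ^ (n + 1 - k) * (((n + 1).factorial : ℝ) / (k.factorial : ℝ))
            * degDowling m lam k x
          = -(((n : ℝ) + 1) * lam) * ((-1 : ℝ) ^ (n - k) * lam ^ (n - k)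
              * ((n.factorial : ℝ) / (k.factorial : ℝ)) * degDowling m lam k x) := by
        intro k hk
        simp only [Finset.mem_range] at hk
        have e : n + 1 - k = (n - k) + 1 := by omega
        rw [e, pow_succ, pow_succ, Nat.factorial_succ]
        push_cast
        ring
      rw [Finset.sum_congr rfl h2, ← Finset.mul_sum, h1]
      ring
    rw [hS, ih, T_rec]
    push_cast
    field_simp
    ring
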